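/- Let p ∈ (0,∞] (with 𝕜 = ℝ or ℂ), let F be an infinite-dimensional closed 𝕜-subspace of ℓ_p with c₀ ⊆ F, and let α be a nonzero cardinal with α ≤ 𝔠. Then F \ Z(F) is (α,𝔠)-spaceable if and only if α is finite, where F \ Z(F) is (α,𝔠)-spaceable means: there exists a subspace V ⊆ F with dim V = α all of whose elements have infinitely many zero coordinates, and for every subspace V ⊆ F with dim V = α all of whose elements have infinitely many zero coordinates there exists a closed subspace W with V ⊆ W ⊆ F, dim W = 𝔠, and every element of W has infinitely many zero coordinates. -/
import Mathlib

open Filter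
open scoped ENNReal Cardinal

/-- Membership in `ℓ_p` for `p ∈ (0,∞]`: for `p = ∞` boundedness, for
`p < ∞` summability of `‖x n‖^p`. -/
def InLp {𝕜 : Type} [RCLike 𝕜] (p : ℝ≥0∞) (x : ℕ → 𝕜) : Prop :=
  if p = ⊤ then ∃ C : ℝ, ∀ n, ‖x n‖ ≤ C
  else Summable (fun n => ‖x n‖ ^ p.toReal)

/-- The `p`-distance on `ℓ_p`. -/
noncomputable def dp {𝕜 : Type} [RCLike 𝕜] (p : ℝ≥0∞) (x y : ℕ → 𝕜) : ℝ :=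
  if p = ⊤ then ⨆ n, ‖x n - y n‖
  else if p < 1 then ∑' n, ‖x n - y n‖ ^ p.toReal
  else (∑' n, ‖x n - y n‖ ^ p.toReal) ^ (1 / p.toReal)

/-- A set of sequences is closed in `ℓ_p` if it contains every `ℓ_p`-limit
(in the `p`-distance) of sequences of its elements. -/
def IsClosedInLp {𝕜 : Type} [RCLike 𝕜] (p : ℝ≥0∞) (F : Set (ℕ → 𝕜)) : Prop :=
  ∀ f : ℕ → (ℕ → 𝕜), (∀ j, f j ∈ F) → ∀ x : ℕ → 𝕜, InLp p x →
    Tendsto (fun j => dp p (f j) x) atTop (nhds 0) → x ∈ F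

namespace Stmt17Aux

open Set

variable {𝕜 : Type} [RCLike 𝕜]

lemma uncount (𝕜 : Type) [RCLike 𝕜] : Uncountable 𝕜 :=
  (RCLike.ofReal_injective (K := 𝕜)).uncountable

/-- sequences supported in `B` -/
def suppIn (𝕜 : Type) [RCLike 𝕜] (B : Set ℕ) : Submodule 𝕜 (ℕ → 𝕜) where
  carrier := {x | ∀ n ∉ B, x n = 0}
  add_mem' {x y} hx hy := fun n hn => by simp [hx n hn, hy n hn]
  zero_mem' := fun n _ => rfl
  smul_mem' c x hx := fun n hn => by simp [hx n hn]

/-- the shift endomorphism -/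
def shift (𝕜 : Type) [RCLike 𝕜] : Module.End 𝕜 (ℕ → 𝕜) where
  toFun x := fun n => x (n + 1)
  map_add' _ _ := rfl
  map_smul' _ _ := rfl

/-- geometric sequences -/
def geo (t : 𝕜) : ℕ → 𝕜 := fun n => t ^ n

lemma geo_eig (t : 𝕜) : (shift 𝕜).HasEigenvector t (geo t) := by
  constructor
  · rw [Module.End.mem_eigenspace_iff]
    funext n
    simp [shift, geo, pow_succ, mul_comm]
  · intro h
    have := congrFun h 0
    simp [geo] at this

lemma li_geo {ι : Type} (e : ι → 𝕜) (he : Function.Injective e) :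
    LinearIndependent 𝕜 (fun i => geo (e i)) :=
  (shift 𝕜).eigenvectors_linearIndependent' e he _ (fun i => geo_eig (e i))

open scoped Classical in
noncomputable def reindexL (𝕜 : Type) [RCLike 𝕜] (a : ℕ → ℕ) :
    (ℕ → 𝕜) →ₗ[𝕜] (ℕ → 𝕜) where
  toFun x := fun n => if h : ∃ k, a k = n then x h.choose else 0
  map_add' x y := by
    funext n
    by_cases h : ∃ k, a k = n <;> simp [h]
  map_smul' c x := by
    funext n
    by_cases h : ∃ k, a k = n <;> simp [h]

lemma reindexL_apply_a (a : ℕ → ℕ) (ha : Function.Injective a) (x : ℕ → 𝕜) (k : ℕ) :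
    reindexL 𝕜 a x (a k) = x k := by
  have h : ∃ k', a k' = a k := ⟨k, rfl⟩
  simp only [reindexL, LinearMap.coe_mk, AddHom.coe_mk, dif_pos h]
  exact congrArg x (ha h.choose_spec)

lemma reindexL_apply_not (a : ℕ → ℕ) (x : ℕ → 𝕜) {n : ℕ}
    (hn : ¬ ∃ k, a k = n) : reindexL 𝕜 a x n = 0 := by
  simp only [reindexL, LinearMap.coe_mk, AddHom.coe_mk, dif_neg hn]

lemma reindexL_injective (a : ℕ → ℕ) (ha : Function.Injective a) :
    Function.Injective (reindexL 𝕜 a) := by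
  intro x y h
  funext k
  have := congrFun h (a k)
  rwa [reindexL_apply_a a ha, reindexL_apply_a a ha] at this

lemma tendsto_reindex (a : ℕ → ℕ) (ha : StrictMono a) {x : ℕ → 𝕜}
    (hx : Tendsto x atTop (nhds 0)) :
    Tendsto (reindexL 𝕜 a x) atTop (nhds 0) := by
  rw [NormedAddCommGroup.tendsto_nhds_zero] at hx ⊢
  intro ε hε
  rcases (hx ε hε).exists_forall_of_atTop.imp (fun K hK => hK) with ⟨K, hK⟩
  · rw [eventually_atTop]
    refine ⟨a K, fun n hn => ?_⟩
    by_cases h : ∃ k, a k = n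
    · obtain ⟨k, rfl⟩ := h
      rw [reindexL_apply_a a ha.injective]
      exact hK k ((ha.le_iff_le).mp hn)
    · rw [reindexL_apply_not a x h]
      simpa using hε

lemma li_single {ι : Type} (e : ι → ℕ) (he : Function.Injective e) :
    LinearIndependent 𝕜 (fun i => Pi.single (e i) (1 : 𝕜) : ι → ℕ → 𝕜) := by
  rw [linearIndependent_iff']
  intro s g hg i hi
  have := congrFun hg (e i)
  simp only [Finset.sum_apply, Pi.smul_apply, Pi.zero_apply] at this
  rw [Finset.sum_eq_single i] at this
  · simpa using this
  · intro j hj hji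
    have : e j ≠ e i := fun h => hji (he h)
    simp [Pi.single_apply, this]
  · intro h
    exact absurd hi h

lemma mk_K_le_continuum : #𝕜 ≤ Cardinal.continuum := by
  let b := Module.finBasis ℝ 𝕜
  have hinj : Function.Injective (fun (x : 𝕜) (i : Fin (Module.finrank ℝ 𝕜)) => b.repr x i) := by
    intro x y h
    apply b.repr.injective
    ext i
    exact congrFun h i
  calc #𝕜 ≤ #(Fin (Module.finrank ℝ 𝕜) → ℝ) := Cardinal.mk_le_of_injective hinj
    _ ≤ Cardinal.continuum ^ (Cardinal.aleph0 : Cardinal) := by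
        rw [Cardinal.mk_arrow]
        simp only [Cardinal.lift_uzero, Cardinal.mk_real, Cardinal.mk_fin, Cardinal.lift_natCast]
        exact Cardinal.power_le_power_left Cardinal.continuum_ne_zero
          (le_of_lt (Cardinal.nat_lt_aleph0 _))
    _ = Cardinal.continuum := Cardinal.continuum_power_aleph0

lemma rank_le_continuum (U : Submodule 𝕜 (ℕ → 𝕜)) :
    Module.rank 𝕜 ↥U ≤ Cardinal.continuum := by
  calc Module.rank 𝕜 ↥U ≤ Module.rank 𝕜 (ℕ → 𝕜) :=
        (Submodule.rank_mono le_top).trans (by rw [rank_top])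
    _ ≤ #(ℕ → 𝕜) := rank_le_card _ _
    _ ≤ Cardinal.continuum := by
        rw [Cardinal.mk_arrow]
        simp only [Cardinal.lift_uzero, Cardinal.mk_nat, Cardinal.lift_id]
        calc #𝕜 ^ (Cardinal.aleph0 : Cardinal)
            ≤ Cardinal.continuum ^ (Cardinal.aleph0 : Cardinal) :=
              Cardinal.power_le_power_right mk_K_le_continuum
          _ = Cardinal.continuum := Cardinal.continuum_power_aleph0

lemma rpow_add_le {q : ℝ} (hq : 0 < q) (a b : ℝ) (ha : 0 ≤ a) (hb : 0 ≤ b) :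
    (a + b) ^ q ≤ 2 ^ q * (a ^ q + b ^ q) := by
  have hmax : a + b ≤ 2 * max a b := by
    rcases le_total a b with h | h
    · rw [max_eq_right h]; linarith
    · rw [max_eq_left h]; linarith
  calc (a + b) ^ q ≤ (2 * max a b) ^ q :=
        Real.rpow_le_rpow (by positivity) hmax hq.le
    _ = 2 ^ q * (max a b) ^ q := Real.mul_rpow (by norm_num) (le_max_of_le_left ha)
    _ ≤ 2 ^ q * (a ^ q + b ^ q) := by
        apply mul_le_mul_of_nonneg_left _ (by positivity)
        rcases max_cases a b with ⟨h, _⟩ | ⟨h, _⟩ <;> rw [h]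
        · exact le_add_of_nonneg_right (Real.rpow_nonneg hb q)
        · exact le_add_of_nonneg_left (Real.rpow_nonneg ha q)

lemma summable_sub_rpow {q : ℝ} (hq : 0 < q) {x y : ℕ → 𝕜}
    (hx : Summable fun n => ‖x n‖ ^ q) (hy : Summable fun n => ‖y n‖ ^ q) :
    Summable fun n => ‖x n - y n‖ ^ q := by
  apply Summable.of_nonneg_of_le (fun n => Real.rpow_nonneg (norm_nonneg _) q)
    (fun n => ?_) ((hx.add hy).mul_left (2 ^ q))
  calc ‖x n - y n‖ ^ q ≤ (‖x n‖ + ‖y n‖) ^ q :=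
        Real.rpow_le_rpow (norm_nonneg _) (norm_sub_le _ _) hq.le
    _ ≤ 2 ^ q * (‖x n‖ ^ q + ‖y n‖ ^ q) := rpow_add_le hq _ _ (norm_nonneg _) (norm_nonneg _)

lemma tendsto_zero_of_inLp {p : ℝ≥0∞} (hp : 0 < p) (hpt : p ≠ ⊤) {x : ℕ → 𝕜}
    (hx : InLp p x) : Tendsto x atTop (nhds 0) := by
  rw [InLp, if_neg hpt] at hx
  have hq : 0 < p.toReal := ENNReal.toReal_pos hp.ne' hpt
  have h1 : Tendsto (fun n => ‖x n‖ ^ p.toReal) atTop (nhds 0) := hx.tendsto_atTop_zero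
  have h2 := h1.rpow_const (p := (p.toReal)⁻¹) (Or.inr (by positivity))
  rw [Real.zero_rpow (inv_ne_zero hq.ne')] at h2
  rw [tendsto_iff_norm_sub_tendsto_zero]
  simp only [sub_zero]
  exact h2.congr fun n => Real.rpow_rpow_inv (norm_nonneg _) hq.ne'

lemma dp_tsum_tendsto {p : ℝ≥0∞} (hp : 0 < p) (hpt : p ≠ ⊤) {f : ℕ → ℕ → 𝕜} {x : ℕ → 𝕜}
    (h : Tendsto (fun j => dp p (f j) x) atTop (nhds 0)) :
    Tendsto (fun j => ∑' n, ‖f j n - x n‖ ^ p.toReal) atTop (nhds 0) := by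
  have hq : 0 < p.toReal := ENNReal.toReal_pos hp.ne' hpt
  by_cases h1 : p < 1
  · exact h.congr fun j => by rw [dp, if_neg hpt, if_pos h1]
  · have h2 := h.rpow_const (p := p.toReal) (Or.inr hq.le)
    rw [Real.zero_rpow hq.ne'] at h2
    refine h2.congr fun j => ?_
    rw [dp, if_neg hpt, if_neg h1, one_div,
      Real.rpow_inv_rpow (tsum_nonneg fun n => Real.rpow_nonneg (norm_nonneg _) _) hq.ne']

lemma dp_pointwise {p : ℝ≥0∞} (hp : 0 < p) {f : ℕ → ℕ → 𝕜} {x : ℕ → 𝕜}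
    (hf : ∀ j, InLp p (f j)) (hx : InLp p x)
    (h : Tendsto (fun j => dp p (f j) x) atTop (nhds 0)) (n : ℕ) :
    Tendsto (fun j => f j n) atTop (nhds (x n)) := by
  rw [tendsto_iff_norm_sub_tendsto_zero]
  by_cases hpt : p = ⊤
  · subst hpt
    refine squeeze_zero (fun j => norm_nonneg _) (g := fun j => dp ⊤ (f j) x) (fun j => ?_) h
    simp only [dp, if_pos rfl, reduceIte]
    have hfj := hf j; have hx' := hx
    rw [InLp, if_pos rfl] at hfj hx'
    obtain ⟨C1, hC1⟩ := hfj
    obtain ⟨C2, hC2⟩ := hx'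
    refine le_ciSup (f := fun m => ‖f j m - x m‖) ⟨C1 + C2, ?_⟩ n
    rintro r ⟨m, rfl⟩
    exact (norm_sub_le _ _).trans (add_le_add (hC1 m) (hC2 m))
  · have hq : 0 < p.toReal := ENNReal.toReal_pos hp.ne' hpt
    have hxs := hx; rw [InLp, if_neg hpt] at hxs
    have hsum : ∀ j, Summable (fun m => ‖f j m - x m‖ ^ p.toReal) := fun j => by
      have hfj := hf j; rw [InLp, if_neg hpt] at hfj
      exact summable_sub_rpow hq hfj hxs
    have hterm : Tendsto (fun j => ‖f j n - x n‖ ^ p.toReal) atTop (nhds 0) :=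
      squeeze_zero (fun j => Real.rpow_nonneg (norm_nonneg _) _)
        (fun j => Summable.le_tsum (hsum j) n (fun m _ => Real.rpow_nonneg (norm_nonneg _) _))
        (dp_tsum_tendsto hp hpt h)
    have h2 := hterm.rpow_const (p := (p.toReal)⁻¹) (Or.inr (by positivity))
    rw [Real.zero_rpow (inv_ne_zero hq.ne')] at h2
    exact h2.congr fun j => Real.rpow_rpow_inv (norm_nonneg _) hq.ne'

lemma common_zeros (V : Submodule 𝕜 (ℕ → 𝕜)) [FiniteDimensional 𝕜 ↥V]
    (hz : ∀ x ∈ V, {n | x n = 0}.Infinite) : {n | ∀ x ∈ V, x n = 0}.Infinite := by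
  classical
  obtain ⟨s, hs⟩ : V.FG := Module.Finite.iff_fg.mp inferInstance
  set B := {n : ℕ | ¬ ∀ x ∈ V, x n = 0} with hB
  have hspan : ∀ n, (∀ y ∈ s, y n = 0) → ∀ x ∈ V, x n = 0 := by
    intro n hy x hx
    rw [← hs] at hx
    induction hx using Submodule.span_induction with
    | mem y h => exact hy y h
    | zero => rfl
    | add a b _ _ ha hb => simp [ha, hb]
    | smul c a _ ha => simp [ha]
  have hpol : ∀ n ∈ B, ∃ y ∈ s, y n ≠ 0 := by
    intro n hn
    by_contra hcon
    push_neg at hcon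
    exact hn (hspan n hcon)
  let e := s.equivFin
  let m := s.card
  let v : Fin m → (ℕ → 𝕜) := fun i => (e.symm i : ℕ → 𝕜)
  let P : ℕ → Polynomial 𝕜 := fun n => ∑ i : Fin m, Polynomial.C (v i n) * Polynomial.X ^ (i : ℕ)
  have hPne : ∀ n ∈ B, P n ≠ 0 := by
    intro n hn hP
    obtain ⟨y, hy, hyn⟩ := hpol n hn
    apply hyn
    have hc : (P n).coeff (e ⟨y, hy⟩ : ℕ) = v (e ⟨y, hy⟩) n := by
      simp only [P, Polynomial.finset_sum_coeff, Polynomial.coeff_C_mul,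
        Polynomial.coeff_X_pow]
      rw [Finset.sum_eq_single (e ⟨y, hy⟩)]
      · simp
      · intro i _ hne
        have hne' : ¬ ((e ⟨y, hy⟩ : ℕ) = (i : ℕ)) := by
          simp only [Fin.val_inj]
          exact fun h => hne h.symm
        simp [hne']
      · simp
    rw [hP] at hc
    have hv : v (e ⟨y, hy⟩) n = 0 := by simpa using hc.symm
    simpa [v, Equiv.symm_apply_apply] using hv
  have hroots : (⋃ n ∈ B, {t : 𝕜 | (P n).IsRoot t}).Countable := by
    apply Set.Countable.biUnion (Set.to_countable _)
    intro n hn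
    exact (Polynomial.finite_setOf_isRoot (hPne n hn)).countable
  obtain ⟨t, ht⟩ : ∃ t : 𝕜, t ∉ ⋃ n ∈ B, {t : 𝕜 | (P n).IsRoot t} := by
    by_contra hcon
    push_neg at hcon
    exact (Set.not_countable_univ_iff.mpr (uncount 𝕜))
      (Set.eq_univ_of_forall hcon ▸ hroots)
  let w : ℕ → 𝕜 := ∑ i : Fin m, t ^ (i : ℕ) • v i
  have hwV : w ∈ V := by
    rw [← hs]
    apply Submodule.sum_mem
    intro i _
    exact Submodule.smul_mem _ _ (Submodule.subset_span (e.symm i).2)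
  have hwB : ∀ n ∈ B, w n ≠ 0 := by
    intro n hn h0
    apply ht
    refine Set.mem_biUnion hn ?_
    show (P n).IsRoot t
    rw [Polynomial.IsRoot.def]
    have : (P n).eval t = w n := by
      simp only [P, Polynomial.eval_finset_sum, Polynomial.eval_mul, Polynomial.eval_C,
        Polynomial.eval_pow, Polynomial.eval_X, w, Finset.sum_apply, Pi.smul_apply,
        smul_eq_mul]
      exact Finset.sum_congr rfl fun i _ => mul_comm _ _
    rw [this, h0]
  exact (hz w hwV).mono fun n hn => by
    by_contra hB'
    exact hwB n hB' hn

lemma norm_geo_half (n : ℕ) : ‖((2:𝕜)⁻¹) ^ n‖ = ((2:ℝ)⁻¹) ^ n := by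
  rw [norm_pow, norm_inv, RCLike.norm_two]

lemma inLp_geo_half {p : ℝ≥0∞} (hp : 0 < p) : InLp p (fun n => ((2:𝕜)⁻¹) ^ n) := by
  by_cases hpt : p = ⊤
  · subst hpt
    rw [InLp, if_pos rfl]
    refine ⟨1, fun n => ?_⟩
    rw [norm_geo_half]
    exact pow_le_one₀ (by norm_num) (by norm_num)
  · rw [InLp, if_neg hpt]
    have hq : 0 < p.toReal := ENNReal.toReal_pos hp.ne' hpt
    have : ∀ n : ℕ, ‖((2:𝕜)⁻¹) ^ n‖ ^ p.toReal = (((2:ℝ)⁻¹) ^ p.toReal) ^ n := by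
      intro n
      rw [norm_geo_half, ← Real.rpow_natCast ((2:ℝ)⁻¹) n, ← Real.rpow_mul (by norm_num),
        mul_comm, Real.rpow_mul (by norm_num), Real.rpow_natCast]
    rw [funext this]
    exact summable_geometric_of_lt_one (Real.rpow_nonneg (by norm_num) _)
      (Real.rpow_lt_one (by norm_num) (by norm_num) hq)

lemma geo_half_mem_closed {p : ℝ≥0∞} (hp : 0 < p) (W : Submodule 𝕜 (ℕ → 𝕜))
    (hWc : IsClosedInLp p (W : Set (ℕ → 𝕜)))
    (hsingle : ∀ (k : ℕ) (c : 𝕜), (Pi.single k c : ℕ → 𝕜) ∈ W) :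
    (fun n => ((2:𝕜)⁻¹) ^ n) ∈ W := by
  classical
  set x : ℕ → 𝕜 := fun n => ((2:𝕜)⁻¹) ^ n with hx
  set f : ℕ → ℕ → 𝕜 := fun j n => if n ≤ j then x n else 0 with hf
  have hfW : ∀ j, f j ∈ W := by
    intro j
    have : f j = ∑ k ∈ Finset.range (j+1), (Pi.single k (x k) : ℕ → 𝕜) := by
      funext n
      rw [Finset.sum_apply]
      simp only [Pi.single_apply]
      rw [Finset.sum_ite_eq (Finset.range (j+1)) n (fun k => x k)]
      simp [Nat.lt_succ_iff, hf]
    rw [this]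
    exact Submodule.sum_mem _ fun k _ => hsingle k (x k)
  have hdiff : ∀ j n, ‖f j n - x n‖ = if n ≤ j then 0 else ((2:ℝ)⁻¹) ^ n := by
    intro j n
    by_cases h : n ≤ j
    · simp [hf, h]
    · simp only [hf, if_neg h]
      rw [zero_sub, norm_neg, norm_geo_half]
  apply hWc f hfW x (inLp_geo_half hp)
  by_cases hpt : p = ⊤
  · subst hpt
    have hle : ∀ j, dp ⊤ (f j) x ≤ ((2:ℝ)⁻¹) ^ j := by
      intro j
      simp only [dp, reduceIte]
      apply Real.iSup_le _ (by positivity)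
      intro n
      rw [hdiff j n]
      by_cases h : n ≤ j
      · rw [if_pos h]; positivity
      · rw [if_neg h]
        exact pow_le_pow_of_le_one (by norm_num) (by norm_num) (le_of_not_ge h)
    have hge : ∀ j, 0 ≤ dp ⊤ (f j) x := by
      intro j
      simp only [dp, reduceIte]
      exact Real.iSup_nonneg fun n => norm_nonneg _
    exact squeeze_zero hge hle
      (tendsto_pow_atTop_nhds_zero_of_lt_one (by norm_num) (by norm_num))
  · have hq : 0 < p.toReal := ENNReal.toReal_pos hp.ne' hpt
    set s : ℝ := ((2:ℝ)⁻¹) ^ p.toReal with hs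
    have hs0 : 0 ≤ s := Real.rpow_nonneg (by norm_num) _
    have hs1 : s < 1 := Real.rpow_lt_one (by norm_num) (by norm_num) hq
    have hsummable : Summable (fun n : ℕ => s ^ n) := summable_geometric_of_lt_one hs0 hs1
    have hterm : ∀ j n, ‖f j n - x n‖ ^ p.toReal = s ^ n - (if n ≤ j then s ^ n else 0) := by
      intro j n
      rw [hdiff j n]
      by_cases h : n ≤ j
      · simp [h, Real.zero_rpow hq.ne']
      · rw [if_neg h, if_neg h, sub_zero, ← Real.rpow_natCast ((2:ℝ)⁻¹) n,
          ← Real.rpow_mul (by norm_num), mul_comm, Real.rpow_mul (by norm_num),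
          Real.rpow_natCast]
    have htsum : Tendsto (fun j => ∑' n, ‖f j n - x n‖ ^ p.toReal) atTop (nhds 0) := by
      have heq : ∀ j, ∑' n, ‖f j n - x n‖ ^ p.toReal
          = (∑' n : ℕ, s ^ n) - ∑ k ∈ Finset.range (j+1), s ^ k := by
        intro j
        have h1 : Summable (fun n : ℕ => if n ≤ j then s ^ n else 0) := by
          apply summable_of_finite_support
          apply Set.Finite.subset (Set.finite_Iic j)
          intro n hn
          simp only [Function.mem_support] at hn
          by_contra h
          simp only [Set.mem_Iic, not_le] at h
          exact hn (by rw [if_neg (by omega)])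
        have h2 : (∑' n : ℕ, if n ≤ j then s ^ n else 0) = ∑ k ∈ Finset.range (j+1), s ^ k := by
          rw [tsum_eq_sum (s := Finset.range (j+1))]
          · exact Finset.sum_congr rfl fun k hk => by
              rw [if_pos (Nat.lt_succ_iff.mp (Finset.mem_range.mp hk))]
          · intro k hk
            rw [if_neg (by simpa [Nat.lt_succ_iff] using hk)]
        rw [funext (hterm j), Summable.tsum_sub hsummable h1, h2]
      rw [funext heq]
      have hpartial : Tendsto (fun j => ∑ k ∈ Finset.range (j+1), s ^ k) atTop
          (nhds (∑' n : ℕ, s ^ n)) :=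
        (hsummable.hasSum.tendsto_sum_nat).comp (tendsto_add_atTop_nat 1)
      have := (tendsto_const_nhds (x := ∑' n : ℕ, s ^ n) (f := atTop)).sub hpartial
      simpa using this
    by_cases h1 : p < 1
    · exact htsum.congr fun j => by rw [dp, if_neg hpt, if_pos h1]
    · have h2 := htsum.rpow_const (p := 1 / p.toReal) (Or.inr (by positivity))
      rw [Real.zero_rpow (by positivity)] at h2
      exact h2.congr fun j => by rw [dp, if_neg hpt, if_neg h1]

lemma single_tendsto_zero (i : ℕ) (c : 𝕜) :
    Tendsto (Pi.single i c : ℕ → 𝕜) atTop (nhds 0) := by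
  apply Tendsto.congr' _ (tendsto_const_nhds (x := (0:𝕜)))
  rw [Filter.EventuallyEq, eventually_atTop]
  exact ⟨i + 1, fun m hm => by
    have hne : m ≠ i := by omega
    simp [Pi.single_apply, hne]⟩

end Stmt17Aux

open Stmt17Aux

/-- Let `p ∈ (0,∞]`, let `F` be an infinite-dimensional
closed subspace of `ℓ_p` containing `c₀`, and let `α` be a nonzero cardinal
with `α ≤ 𝔠`.  Then `F \ Z(F)` is `(α, 𝔠)`-spaceable if and only if `α` is
finite. -/
theorem stmt17 {𝕜 : Type} [RCLike 𝕜] (p : ℝ≥0∞) (hp : 0 < p)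
    (F : Submodule 𝕜 (ℕ → 𝕜))
    (hFp : (↑F : Set (ℕ → 𝕜)) ⊆ {x | InLp p x})
    (hFc : IsClosedInLp p (↑F : Set (ℕ → 𝕜)))
    (hFdim : Cardinal.aleph0 ≤ Module.rank 𝕜 ↥F)
    (hc0 : ∀ x : ℕ → 𝕜, Tendsto x atTop (nhds 0) → x ∈ F)
    (α : Cardinal) (hα₀ : α ≠ 0) (hα : α ≤ Cardinal.continuum) :
    ((∃ V : Submodule 𝕜 (ℕ → 𝕜), V ≤ F ∧ Module.rank 𝕜 ↥V = α ∧
        ∀ x ∈ V, {n : ℕ | x n = 0}.Infinite) ∧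
      ∀ V : Submodule 𝕜 (ℕ → 𝕜), V ≤ F → Module.rank 𝕜 ↥V = α →
        (∀ x ∈ V, {n : ℕ | x n = 0}.Infinite) →
        ∃ W : Submodule 𝕜 (ℕ → 𝕜), V ≤ W ∧ W ≤ F ∧
          IsClosedInLp p (↑W : Set (ℕ → 𝕜)) ∧
          Module.rank 𝕜 ↥W = Cardinal.continuum ∧
          ∀ x ∈ W, {n : ℕ | x n = 0}.Infinite)
    ↔ α < Cardinal.aleph0 := by
  classical
  constructor
  · -- spaceable → α finite
    rintro ⟨-, hforall⟩
    by_contra hfin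
    rw [not_lt] at hfin
    have hcard : α ≤ #↥(Set.Ioo (0:ℝ) 1) := by
      rw [Cardinal.mk_Ioo_real (by norm_num : (0:ℝ) < 1)]; exact hα
    obtain ⟨T, hT⟩ := Cardinal.le_mk_iff_exists_set.mp hcard
    set a : ℕ → ℕ := fun k => 2 * k with haa
    have ha : StrictMono a := fun i j h => by simp only [haa]; omega
    set g : ↥T → (ℕ → 𝕜) :=
      fun t => reindexL 𝕜 a (geo (RCLike.ofReal (((t : ↥(Set.Ioo (0:ℝ) 1)) : ℝ)))) with hg
    have heinj : Function.Injective
        (fun t : ↥T => (RCLike.ofReal (((t : ↥(Set.Ioo (0:ℝ) 1)) : ℝ)) : 𝕜)) := by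
      intro s t h
      exact Subtype.ext (Subtype.ext (RCLike.ofReal_injective h))
    have hgli : LinearIndependent 𝕜 g :=
      (li_geo _ heinj).map' _ (LinearMap.ker_eq_bot.mpr (reindexL_injective a ha.injective))
    have hgc0 : ∀ t, Tendsto (g t) atTop (nhds 0) := by
      intro t
      apply tendsto_reindex a ha
      have hlt : ‖(RCLike.ofReal (((t : ↥(Set.Ioo (0:ℝ) 1)) : ℝ)) : 𝕜)‖ < 1 := by
        rw [RCLike.norm_ofReal]
        have h1 := (t : ↥(Set.Ioo (0:ℝ) 1)).2.1
        have h2 := (t : ↥(Set.Ioo (0:ℝ) 1)).2.2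
        rw [abs_of_pos h1]
        exact h2
      exact tendsto_pow_atTop_nhds_zero_of_norm_lt_one hlt
    set V : Submodule 𝕜 (ℕ → 𝕜) :=
      Submodule.span 𝕜 (Set.range (fun k : ℕ => (Pi.single k (1:𝕜) : ℕ → 𝕜)) ∪ Set.range g)
      with hV
    have hVF : V ≤ F := by
      rw [hV, Submodule.span_le]
      rintro x (⟨k, rfl⟩ | ⟨t, rfl⟩)
      · exact hc0 _ (single_tendsto_zero k 1)
      · exact hc0 _ (hgc0 t)
    have hgodd : ∀ t m, m % 2 = 1 → g t m = 0 := by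
      intro t m hm
      apply reindexL_apply_not
      rintro ⟨k, hk⟩
      simp only [haa] at hk
      omega
    have hzero : ∀ x ∈ V, {n : ℕ | x n = 0}.Infinite := by
      intro x hx
      have hQ : ∀ᶠ m in atTop, m % 2 = 1 → x m = 0 := by
        rw [hV] at hx
        induction hx using Submodule.span_induction with
        | mem y h =>
          rcases h with ⟨k, rfl⟩ | ⟨t, rfl⟩
          · rw [eventually_atTop]
            exact ⟨k + 1, fun m hm _ => by
              have hne : m ≠ k := by omega
              simp [Pi.single_apply, hne]⟩
          · exact Filter.Eventually.of_forall (hgodd t)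
        | zero => exact Filter.Eventually.of_forall (fun m _ => rfl)
        | add u w _ _ hu hw =>
          filter_upwards [hu, hw] with m h1 h2 hm
          simp [h1 hm, h2 hm]
        | smul c u _ hu =>
          filter_upwards [hu] with m h1 hm
          simp [h1 hm]
      rw [eventually_atTop] at hQ
      obtain ⟨N, hN⟩ := hQ
      apply Set.infinite_of_injective_forall_mem (f := fun k : ℕ => 2 * (N + k) + 1)
      · intro i j h
        dsimp only at h
        omega
      · intro k
        exact hN _ (by omega) (by omega)
    have hrank : Module.rank 𝕜 ↥V = α := by
      apply le_antisymm
      · calc Module.rank 𝕜 ↥V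
            ≤ #↥(Set.range (fun k : ℕ => (Pi.single k (1:𝕜) : ℕ → 𝕜)) ∪ Set.range g) :=
              rank_span_le _
          _ ≤ #↥(Set.range (fun k : ℕ => (Pi.single k (1:𝕜) : ℕ → 𝕜))) + #↥(Set.range g) :=
              Cardinal.mk_union_le _ _
          _ ≤ Cardinal.aleph0 + α := by
              apply add_le_add
              · exact Cardinal.mk_range_le.trans (by simp)
              · exact Cardinal.mk_range_le.trans (le_of_eq hT)
          _ = α := Cardinal.add_eq_right hfin hfin
      · rw [← hT]
        have hg' : LinearIndependent 𝕜
            (fun t : ↥T => (⟨g t, Submodule.subset_span (Or.inr ⟨t, rfl⟩)⟩ : ↥V)) :=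
          hgli.of_comp V.subtype
        exact hg'.cardinal_le_rank
    obtain ⟨W, hVW, hWF, hWc, hrankW, hWz⟩ := hforall V hVF hrank hzero
    have hsingleW : ∀ (k : ℕ) (c : 𝕜), (Pi.single k c : ℕ → 𝕜) ∈ W := by
      intro k c
      have h1 : (Pi.single k (1:𝕜) : ℕ → 𝕜) ∈ W :=
        hVW (Submodule.subset_span (Or.inl ⟨k, rfl⟩))
      have h2 : (Pi.single k c : ℕ → 𝕜) = c • (Pi.single k (1:𝕜) : ℕ → 𝕜) := by
        funext m
        by_cases h : m = k <;> simp [Pi.single_apply, h]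
      rw [h2]
      exact Submodule.smul_mem _ _ h1
    have hxW := geo_half_mem_closed hp W hWc hsingleW
    have hinf := hWz _ hxW
    have hempty : {n : ℕ | ((2:𝕜)⁻¹) ^ n = 0} = ∅ := by
      ext n
      simp [pow_ne_zero, inv_ne_zero]
    rw [hempty] at hinf
    exact Set.not_infinite.mpr Set.finite_empty hinf
  · intro hfin
    constructor
    · -- existence of V
      obtain ⟨n, hn⟩ := Cardinal.lt_aleph0.mp hfin
      refine ⟨Submodule.span 𝕜 (Set.range (fun i : Fin n => (Pi.single (i : ℕ) (1:𝕜) : ℕ → 𝕜))),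
        ?_, ?_, ?_⟩
      · rw [Submodule.span_le]
        rintro _ ⟨i, rfl⟩
        exact hc0 _ (single_tendsto_zero _ 1)
      · have hli := li_single (𝕜 := 𝕜) (fun i : Fin n => (i : ℕ)) (fun i j h => Fin.val_inj.mp h)
        rw [rank_span hli, Cardinal.mk_range_eq _ hli.injective, Cardinal.mk_fin, hn]
      · intro x hx
        have hsupp : ∀ m, n ≤ m → x m = 0 := by
          have hle : Submodule.span 𝕜
              (Set.range (fun i : Fin n => (Pi.single (i : ℕ) (1:𝕜) : ℕ → 𝕜)))
              ≤ suppIn 𝕜 (Set.Iio n) := by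
            rw [Submodule.span_le]
            rintro _ ⟨i, rfl⟩
            intro m hm
            have hmi : m ≠ (i : ℕ) := by
              simp only [Set.mem_Iio, not_lt] at hm
              have := i.2
              omega
            simp [Pi.single_apply, hmi]
          intro m hm
          exact hle hx m (by simpa using hm)
        apply Set.infinite_of_injective_forall_mem (f := fun k : ℕ => n + k)
        · intro i j h; dsimp only at h; omega
        · intro k
          exact hsupp _ (by omega)
    · -- the W construction
      intro V hVF hrank hzero
      haveI hfree : Module.Free 𝕜 ↥V := Module.Free.of_divisionRing 𝕜 ↥V
      haveI : FiniteDimensional 𝕜 ↥V :=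
        Module.rank_lt_aleph0_iff.mp (by rw [hrank]; exact hfin)
      set A := {m : ℕ | ∀ x ∈ V, x m = 0} with hA
      have hAinf : A.Infinite := common_zeros V hzero
      set a : ℕ → ℕ := Nat.nth (· ∈ A) with ha
      have haS : StrictMono a := Nat.nth_strictMono hAinf
      have haA : ∀ k, a k ∈ A := fun k => Nat.nth_mem_of_infinite hAinf k
      set a2 : ℕ → ℕ := fun k => a (2 * k) with ha2def
      have ha2 : StrictMono a2 := fun i j h => haS (by omega)
      set A1 := Set.range a2 with hA1
      have hA1A : A1 ⊆ A := by rintro _ ⟨k, rfl⟩; exact haA _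
      set C := F ⊓ suppIn 𝕜 A1 with hC
      have hWF : V ⊔ C ≤ F := sup_le hVF inf_le_left
      refine ⟨V ⊔ C, le_sup_left, hWF, ?_, ?_, ?_⟩
      · -- closedness
        intro f hfW y hy hdp
        have hfF : ∀ j, f j ∈ F := fun j => hWF (hfW j)
        have hyF : y ∈ F := hFc f (fun j => hfF j) y hy hdp
        have hpt : ∀ m, Tendsto (fun j => f j m) atTop (nhds (y m)) :=
          dp_pointwise hp (fun j => hFp (hfF j)) (hFp hyF) hdp
        have hdec : ∀ j, ∃ v ∈ V, ∃ c ∈ C, v + c = f j := fun j => Submodule.mem_sup.mp (hfW j)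
        choose v hvV c hcC hvc using hdec
        have hcsupp : ∀ j, ∀ m ∉ A1, c j m = 0 := fun j => (Submodule.mem_inf.mp (hcC j)).2
        set vbar : ℕ → 𝕜 := fun m => if m ∈ A then 0 else y m with hvbar
        have hvten : Tendsto (fun j => v j) atTop (nhds vbar) := by
          rw [tendsto_pi_nhds]
          intro m
          by_cases hm : m ∈ A
          · have h0 : ∀ j, v j m = 0 := fun j => hm (v j) (hvV j)
            simp only [hvbar, if_pos hm]
            exact tendsto_const_nhds.congr fun j => (h0 j).symm
          · have hm1 : m ∉ A1 := fun h => hm (hA1A h)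
            have heq : ∀ j, v j m = f j m := fun j => by
              rw [← hvc j]
              simp [hcsupp j m hm1]
            simp only [hvbar, if_neg hm]
            exact (hpt m).congr fun j => (heq j).symm
        have hvbarV : vbar ∈ V :=
          (Submodule.closed_of_finiteDimensional V).mem_of_tendsto hvten
            (Filter.Eventually.of_forall fun j => hvV j)
        have hybar : y - vbar ∈ C := by
          rw [hC, Submodule.mem_inf]
          refine ⟨Submodule.sub_mem F hyF (hVF hvbarV), ?_⟩
          intro m hm
          by_cases hmA : m ∈ A
          · have hfm : ∀ j, f j m = 0 := fun j => by
              rw [← hvc j]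
              simp [hmA (v j) (hvV j), hcsupp j m hm]
            have hy0 : y m = 0 :=
              tendsto_nhds_unique ((hpt m).congr fun j => hfm j) tendsto_const_nhds
            show y m - vbar m = 0
            simp [hvbar, if_pos hmA, hy0]
          · show y m - vbar m = 0
            simp [hvbar, if_neg hmA]
        have hsum : y = vbar + (y - vbar) := by abel
        rw [hsum]
        exact Submodule.add_mem _ (le_sup_left (α := Submodule 𝕜 (ℕ → 𝕜)) hvbarV)
          (le_sup_right (α := Submodule 𝕜 (ℕ → 𝕜)) hybar)
      · -- rank
        apply le_antisymm (rank_le_continuum _)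
        set g : ↥(Set.Ioo (0:ℝ) 1) → (ℕ → 𝕜) :=
          fun t => reindexL 𝕜 a2 (geo (RCLike.ofReal (t : ℝ))) with hg
        have heinj : Function.Injective
            (fun t : ↥(Set.Ioo (0:ℝ) 1) => (RCLike.ofReal ((t : ℝ)) : 𝕜)) :=
          fun s t h => Subtype.ext (RCLike.ofReal_injective h)
        have hgli : LinearIndependent 𝕜 g :=
          (li_geo _ heinj).map' _
            (LinearMap.ker_eq_bot.mpr (reindexL_injective a2 ha2.injective))
        have hgW : ∀ t, g t ∈ V ⊔ C := by
          intro t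
          apply le_sup_right (α := Submodule 𝕜 (ℕ → 𝕜))
          rw [hC, Submodule.mem_inf]
          constructor
          · apply hc0
            apply tendsto_reindex a2 ha2
            have hlt : ‖(RCLike.ofReal ((t : ℝ)) : 𝕜)‖ < 1 := by
              rw [RCLike.norm_ofReal, abs_of_pos t.2.1]
              exact t.2.2
            exact tendsto_pow_atTop_nhds_zero_of_norm_lt_one hlt
          · intro m hm
            apply reindexL_apply_not
            intro ⟨k, hk⟩
            exact hm ⟨k, hk⟩
        have hg' : LinearIndependent 𝕜
            (fun t : ↥(Set.Ioo (0:ℝ) 1) => (⟨g t, hgW t⟩ : ↥(V ⊔ C))) :=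
          hgli.of_comp (V ⊔ C).subtype
        have := hg'.cardinal_le_rank
        rwa [Cardinal.mk_Ioo_real (by norm_num : (0:ℝ) < 1)] at this
      · -- infinite zero sets
        intro x hx
        obtain ⟨v, hvV, c, hcC, hvc⟩ := Submodule.mem_sup.mp hx
        have hA2 : (A \ A1).Infinite := by
          apply Set.infinite_of_injective_forall_mem (f := fun k : ℕ => a (2 * k + 1))
          · intro i j h
            have := haS.injective h
            omega
          · intro k
            refine ⟨haA _, ?_⟩
            rintro ⟨k', hk'⟩
            have : 2 * k' = 2 * k + 1 := haS.injective hk'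
            omega
        apply hA2.mono
        rintro m ⟨hmA, hmA1⟩
        have h1 : v m = 0 := hmA v hvV
        have h2 : c m = 0 := (Submodule.mem_inf.mp hcC).2 m hmA1
        show x m = 0
        rw [← hvc]
        simp [h1, h2]
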